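/- Let (m̄_k)_{k≥1} be a nondecreasing sequence of integers with m̄_1 ≥ 1 and m̄_k ≤ k·m̄_1 for all k. Then Θ is infinitely differentiable on the open region {(α,β) : 1/2 < β < 1, 1−β < α < β}, and for every β₀ ∈ (1/2,1) there is an open neighborhood of the diagonal point (β₀,β₀) in ℝ² on which Θ is infinitely differentiable; on these sets all partial derivatives of Θ of every order are obtained by termwise differentiation of the defining series, and in particular ∂_α Θ(α,β) = Σ_{k=1}^∞ [ (k/β)((α−1)/β)^{k−1}(α/β)^{m̄_k} + (m̄_k/β)((α−1)/β)^k(α/β)^{m̄_k−1} ] and ∂_β Θ(α,β) = −1 + Σ_{k=1}^∞ (−(k+m̄_k)/β)((α−1)/β)^k(α/β)^{m̄_k}. -/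

import Mathlib

/-- The auxiliary function `Θ` associated to the sequence `m̄` (with `m̄ 0 = 0`):
`Θ(α,β) = 1 - β + ∑_{k=1}^∞ ((α-1)/β)^k (α/β)^{m̄_k}`. -/
noncomputable def theta (m : ℕ → ℕ) (α β : ℝ) : ℝ :=
  1 - β + ∑' k : ℕ, ((α - 1) / β) ^ (k + 1) * (α / β) ^ (m (k + 1))

/-- The termwise-differentiated series formula for `∂_α Θ` at `p = (α,β)`. -/
def derivAlphaEq (m : ℕ → ℕ) (p : ℝ × ℝ) : Prop :=
  deriv (fun a => theta m a p.2) p.1 =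
    ∑' k : ℕ, (((k : ℝ) + 1) / p.2 * ((p.1 - 1) / p.2) ^ k * (p.1 / p.2) ^ (m (k + 1))
      + (m (k + 1) : ℝ) / p.2 * ((p.1 - 1) / p.2) ^ (k + 1)
        * (p.1 / p.2) ^ (m (k + 1) - 1))

/-- The termwise-differentiated series formula for `∂_β Θ` at `p = (α,β)`. -/
def derivBetaEq (m : ℕ → ℕ) (p : ℝ × ℝ) : Prop :=
  deriv (fun b => theta m p.1 b) p.2 =
    -1 + ∑' k : ℕ, (-(((k : ℝ) + 1) + (m (k + 1) : ℝ)) / p.2)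
      * ((p.1 - 1) / p.2) ^ (k + 1) * (p.1 / p.2) ^ (m (k + 1))

open Set Filter

noncomputable section ThetaAux

/-- generic series term -/
noncomputable def thT (m : ℕ → ℕ) (e : ℕ → ℝ) (a b c : ℕ) (k : ℕ) (p : ℝ × ℝ) : ℝ :=
  e k * (p.1 - 1) ^ (k + 1 - a) * p.1 ^ (m (k + 1) - b) *
    (p.2⁻¹) ^ ((k + 1 - a) + (m (k + 1) - b) + c)

def thS (m : ℕ → ℕ) (e : ℕ → ℝ) (a b c : ℕ) (p : ℝ × ℝ) : ℝ := ∑' k, thT m e a b c k p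

def eA1 (e : ℕ → ℝ) (a : ℕ) : ℕ → ℝ := fun k => e k * ((k + 1 - a : ℕ) : ℝ)
def eA2 (m : ℕ → ℕ) (e : ℕ → ℝ) (b : ℕ) : ℕ → ℝ := fun k => e k * ((m (k + 1) - b : ℕ) : ℝ)
def eB (m : ℕ → ℕ) (e : ℕ → ℝ) (a b c : ℕ) : ℕ → ℝ :=
  fun k => -(((k + 1 - a) + (m (k + 1) - b) + c : ℕ) : ℝ) * e k

lemma npow_helper (n : ℕ) (z : ℝ) : (n : ℝ) * z ^ (n - 1) * z = (n : ℝ) * z ^ n := by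
  cases n with
  | zero => simp
  | succ n => rw [Nat.succ_sub_one, pow_succ]; ring

def fstL : ℝ × ℝ →L[ℝ] ℝ := ContinuousLinearMap.fst ℝ ℝ ℝ
def sndL : ℝ × ℝ →L[ℝ] ℝ := ContinuousLinearMap.snd ℝ ℝ ℝ

lemma hasFDerivAt_thT (m : ℕ → ℕ) (e : ℕ → ℝ) (a b c k : ℕ) {p : ℝ × ℝ} (hβ : p.2 ≠ 0) :
    HasFDerivAt (thT m e a b c k)
      ((thT m (eA1 e a) (a + 1) b (c + 1) k p + thT m (eA2 m e b) a (b + 1) (c + 1) k p) • fstL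
        + (thT m (eB m e a b c) a b (c + 1) k p) • sndL) p := by
  have hf : HasDerivAt (fun t : ℝ => (t - 1) ^ (k + 1 - a) * t ^ (m (k + 1) - b))
      ((((k + 1 - a : ℕ) : ℝ) * (p.1 - 1) ^ (k + 1 - a - 1) * 1) * p.1 ^ (m (k + 1) - b)
        + (p.1 - 1) ^ (k + 1 - a) * (((m (k + 1) - b : ℕ) : ℝ) * p.1 ^ (m (k + 1) - b - 1) * 1))
      p.1 :=
    (((hasDerivAt_id p.1).sub_const 1).pow _).mul ((hasDerivAt_id p.1).pow _)
  have hz : HasDerivAt (fun t : ℝ => (t⁻¹) ^ ((k + 1 - a) + (m (k + 1) - b) + c))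
      ((((k + 1 - a) + (m (k + 1) - b) + c : ℕ) : ℝ)
        * (p.2⁻¹) ^ ((k + 1 - a) + (m (k + 1) - b) + c - 1) * (-(p.2 ^ 2)⁻¹)) p.2 :=
    (hasDerivAt_inv hβ).pow _
  have HF := ((hf.comp_hasFDerivAt p (hasFDerivAt_fst (E := ℝ) (F := ℝ) (𝕜 := ℝ))).mul
    (hz.comp_hasFDerivAt p (hasFDerivAt_snd (E := ℝ) (F := ℝ) (𝕜 := ℝ)))).const_mul (e k)
  have funeq : thT m e a b c k = fun q : ℝ × ℝ =>
      e k * (((fun t : ℝ => (t - 1) ^ (k + 1 - a) * t ^ (m (k + 1) - b)) ∘ Prod.fst) q *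
        ((fun t : ℝ => (t⁻¹) ^ ((k + 1 - a) + (m (k + 1) - b) + c)) ∘ Prod.snd) q) := by
    funext q; simp only [thT, Function.comp]; ring
  rw [funeq]
  refine HF.congr_fderiv (Eq.symm ?_)
  refine ContinuousLinearMap.ext fun w => ?_
  simp only [ContinuousLinearMap.add_apply, ContinuousLinearMap.smul_apply,
    ContinuousLinearMap.coe_fst', ContinuousLinearMap.coe_snd', fstL, sndL, smul_eq_mul,
    thT, eA1, eA2, eB, Function.comp]
  have h1 : k + 1 - (a + 1) = (k + 1 - a) - 1 := by omega
  have h2 : m (k + 1) - (b + 1) = (m (k + 1) - b) - 1 := by omega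
  rw [h1, h2]
  generalize k + 1 - a = g
  generalize m (k + 1) - b = h
  push_cast
  rw [← inv_pow]
  have H1 := npow_helper g p.2⁻¹
  have H2 := npow_helper h p.2⁻¹
  have H3 := npow_helper (g + h + c) p.2⁻¹
  push_cast at H1 H2 H3 ⊢
  linear_combination (e k * (p.1 - 1) ^ (g - 1) * p.1 ^ h * (p.2⁻¹) ^ (h + c) * w.1) * H1
    + (e k * (p.1 - 1) ^ g * p.1 ^ (h - 1) * (p.2⁻¹) ^ (g + c) * w.1) * H2
    + (e k * (p.1 - 1) ^ g * p.1 ^ h * p.2⁻¹ * w.2) * H3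


section Main
variable {m : ℕ → ℕ} {s : Set (ℝ × ℝ)} {δ r t : ℝ}

structure Reg (m : ℕ → ℕ) (s : Set (ℝ × ℝ)) (δ r t : ℝ) : Prop where
  opn : IsOpen s
  hδ : 0 < δ
  hr : 0 < r
  ht : 1 ≤ t
  hw : r * t ^ m 1 < 1
  hβ : ∀ p ∈ s, δ ≤ p.2
  hx : ∀ p ∈ s, |p.1 - 1| ≤ r * p.2
  hy : ∀ p ∈ s, |p.1| ≤ t * p.2

lemma thT_le (R : Reg m s δ r t) (hlin : ∀ k : ℕ, 1 ≤ k → m k ≤ k * m 1)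
    {e : ℕ → ℝ} {C : ℝ} {d : ℕ} (hE : ∀ k, |e k| ≤ C * (k + 1) ^ d)
    (a b c : ℕ) {p : ℝ × ℝ} (hp : p ∈ s) (k : ℕ) :
    |thT m e a b c k p| ≤ (C / r ^ a / δ ^ c) * ((k + 1 : ℝ) ^ d * (r * t ^ m 1) ^ (k + 1)) := by
  have hC : 0 ≤ C := le_trans (abs_nonneg (e 0)) (by simpa using hE 0)
  have hβ : (0 : ℝ) < p.2 := lt_of_lt_of_le R.hδ (R.hβ p hp)
  have hβ0 : p.2 ≠ 0 := ne_of_gt hβ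
  have ht0 : (0:ℝ) < t := lt_of_lt_of_le one_pos R.ht
  have hr1 : r ≤ 1 := by nlinarith [R.hw, pow_le_pow_right₀ R.ht (Nat.zero_le (m 1)), R.hr]
  set g := k + 1 - a with hg
  set h := m (k + 1) - b with hh
  have hCd : (0:ℝ) ≤ C * (k + 1 : ℝ) ^ d := mul_nonneg hC (by positivity)
  have hr0 : (0:ℝ) ≤ r := le_of_lt R.hr
  have ht0' : (0:ℝ) ≤ t := le_of_lt ht0
  have hδ0 : (0:ℝ) ≤ δ⁻¹ := le_of_lt (inv_pos.2 R.hδ)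
  have nn1 : (0:ℝ) ≤ (r * p.2) ^ g := pow_nonneg (mul_nonneg hr0 (le_of_lt hβ)) g
  have nn2 : (0:ℝ) ≤ (t * p.2) ^ h := pow_nonneg (mul_nonneg ht0' (le_of_lt hβ)) h
  have nn3 : (0:ℝ) ≤ r ^ g * t ^ h := mul_nonneg (pow_nonneg hr0 g) (pow_nonneg ht0' h)
  have nn4 : (0:ℝ) ≤ (r ^ (k+1) / r ^ a) * (t ^ m 1) ^ (k+1) :=
    mul_nonneg (div_nonneg (pow_nonneg hr0 _) (pow_nonneg hr0 _))
      (pow_nonneg (pow_nonneg ht0' _) _)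
  calc |thT m e a b c k p|
      = |e k| * |p.1 - 1| ^ g * |p.1| ^ h * (p.2⁻¹) ^ (g + h + c) := by
        simp [thT, abs_mul, abs_pow, abs_inv, abs_of_pos hβ]
        rfl
    _ ≤ (C * (k + 1 : ℝ) ^ d) * (r * p.2) ^ g * (t * p.2) ^ h * (p.2⁻¹) ^ (g + h + c) := by
        have b2 : |p.1 - 1| ^ g ≤ (r * p.2) ^ g :=
          pow_le_pow_left₀ (abs_nonneg _) (R.hx p hp) g
        have b3 : |p.1| ^ h ≤ (t * p.2) ^ h :=
          pow_le_pow_left₀ (abs_nonneg _) (R.hy p hp) h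
        have n1 : (0:ℝ) ≤ |e k| * |p.1 - 1| ^ g := by positivity
        refine mul_le_mul_of_nonneg_right ?_ (by positivity)
        refine mul_le_mul ?_ b3 (by positivity) (mul_nonneg hCd nn1)
        exact mul_le_mul (hE k) b2 (by positivity) hCd
    _ = (C * (k + 1 : ℝ) ^ d) * (r ^ g * t ^ h) * (p.2⁻¹) ^ c := by
        simp only [mul_pow, pow_add, inv_pow]
        field_simp
    _ ≤ (C * (k + 1 : ℝ) ^ d) * (r ^ g * t ^ h) * (δ⁻¹) ^ c := by
        refine mul_le_mul_of_nonneg_left ?_ (mul_nonneg hCd nn3)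
        exact pow_le_pow_left₀ (by positivity) (inv_anti₀ R.hδ (R.hβ p hp)) c
    _ ≤ (C * (k + 1 : ℝ) ^ d) * ((r ^ (k + 1) / r ^ a) * (t ^ m 1) ^ (k + 1)) * (δ⁻¹) ^ c := by
        refine mul_le_mul_of_nonneg_right (mul_le_mul_of_nonneg_left ?_ hCd) (pow_nonneg hδ0 c)
        have h1 : r ^ g ≤ r ^ (k + 1) / r ^ a := by
          rw [le_div_iff₀ (pow_pos R.hr a), ← pow_add]
          exact pow_le_pow_of_le_one (le_of_lt R.hr) hr1 (by omega)
        have h2 : t ^ h ≤ (t ^ m 1) ^ (k + 1) := by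
          rw [← pow_mul]
          refine pow_le_pow_right₀ R.ht ?_
          calc h ≤ m (k + 1) := Nat.sub_le _ _
            _ ≤ (k + 1) * m 1 := hlin (k + 1) (by omega)
            _ = m 1 * (k + 1) := Nat.mul_comm _ _
        calc r ^ g * t ^ h ≤ (r ^ (k + 1) / r ^ a) * t ^ h :=
              mul_le_mul_of_nonneg_right h1 (pow_nonneg ht0' h)
          _ ≤ (r ^ (k + 1) / r ^ a) * (t ^ m 1) ^ (k + 1) :=
              mul_le_mul_of_nonneg_left h2 (div_nonneg (pow_nonneg hr0 _) (pow_nonneg hr0 _))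
    _ = (C / r ^ a / δ ^ c) * ((k + 1 : ℝ) ^ d * (r * t ^ m 1) ^ (k + 1)) := by
        rw [mul_pow]
        field_simp
        ring


lemma summable_geom_aux (d : ℕ) {w : ℝ} (h0 : 0 ≤ w) (h1 : w < 1) :
    Summable (fun k : ℕ => (k + 1 : ℝ) ^ d * w ^ (k + 1)) := by
  have h := summable_pow_mul_geometric_of_norm_lt_one (R := ℝ) d
    (r := w) (by rwa [Real.norm_eq_abs, abs_of_nonneg h0])
  have h2 := (summable_nat_add_iff (f := fun n : ℕ => (n : ℝ) ^ d * w ^ n) 1).2 h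
  refine h2.congr fun k => ?_
  push_cast
  ring

lemma summable_thT (R : Reg m s δ r t) (hlin : ∀ k : ℕ, 1 ≤ k → m k ≤ k * m 1)
    {e : ℕ → ℝ} {C : ℝ} {d : ℕ} (hE : ∀ k, |e k| ≤ C * (k + 1) ^ d)
    (a b c : ℕ) {p : ℝ × ℝ} (hp : p ∈ s) :
    Summable (fun k => thT m e a b c k p) := by
  have ht0 : (0:ℝ) < t := lt_of_lt_of_le one_pos R.ht
  have hw0 : (0:ℝ) ≤ r * t ^ m 1 := mul_nonneg (le_of_lt R.hr) (pow_nonneg (le_of_lt ht0) _)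
  refine Summable.of_norm_bounded (((summable_geom_aux d hw0 R.hw)).mul_left
    (C / r ^ a / δ ^ c)) (fun k => ?_)
  rw [Real.norm_eq_abs]
  exact thT_le R hlin hE a b c hp k

lemma coeff_nonneg {e : ℕ → ℝ} {C : ℝ} {d : ℕ} (hE : ∀ k, |e k| ≤ C * (k + 1) ^ d) :
    0 ≤ C := le_trans (abs_nonneg (e 0)) (by simpa using hE 0)

lemma eA1_bound {e : ℕ → ℝ} {C : ℝ} {d : ℕ} (hE : ∀ k, |e k| ≤ C * (k + 1) ^ d) (a : ℕ) :
    ∀ k, |eA1 e a k| ≤ C * (k + 1) ^ (d + 1) := by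
  intro k
  have h1 : |eA1 e a k| = |e k| * ((k + 1 - a : ℕ) : ℝ) := by
    rw [eA1, abs_mul, Nat.abs_cast]
  rw [h1, pow_succ, ← mul_assoc]
  refine mul_le_mul (hE k) ?_ (by positivity) ?_
  · calc ((k + 1 - a : ℕ) : ℝ) ≤ ((k + 1 : ℕ) : ℝ) := Nat.cast_le.2 (by omega)
      _ = (k : ℝ) + 1 := by push_cast; ring
  · exact mul_nonneg (coeff_nonneg hE) (by positivity)

lemma eA2_bound {e : ℕ → ℝ} {C : ℝ} {d : ℕ} (hE : ∀ k, |e k| ≤ C * (k + 1) ^ d)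
    (hlin : ∀ k : ℕ, 1 ≤ k → m k ≤ k * m 1) (b : ℕ) :
    ∀ k, |eA2 m e b k| ≤ (C * m 1) * (k + 1) ^ (d + 1) := by
  intro k
  have h1 : |eA2 m e b k| = |e k| * ((m (k + 1) - b : ℕ) : ℝ) := by
    rw [eA2, abs_mul, Nat.abs_cast]
  rw [h1]
  have h2 : ((m (k + 1) - b : ℕ) : ℝ) ≤ (m 1 : ℝ) * ((k : ℝ) + 1) := by
    calc ((m (k + 1) - b : ℕ) : ℝ) ≤ (((k + 1) * m 1 : ℕ) : ℝ) :=
          Nat.cast_le.2 (le_trans (Nat.sub_le _ _) (hlin (k + 1) (by omega)))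
      _ = (m 1 : ℝ) * ((k : ℝ) + 1) := by push_cast; ring
  calc |e k| * ((m (k + 1) - b : ℕ) : ℝ)
      ≤ (C * (k + 1) ^ d) * ((m 1 : ℝ) * ((k : ℝ) + 1)) :=
        mul_le_mul (hE k) h2 (by positivity)
          (mul_nonneg (coeff_nonneg hE) (by positivity))
    _ = (C * m 1) * (k + 1) ^ (d + 1) := by rw [pow_succ]; ring

lemma eB_bound {e : ℕ → ℝ} {C : ℝ} {d : ℕ} (hE : ∀ k, |e k| ≤ C * (k + 1) ^ d)
    (hlin : ∀ k : ℕ, 1 ≤ k → m k ≤ k * m 1) (a b c : ℕ) :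
    ∀ k, |eB m e a b c k| ≤ (C * (m 1 + c + 1)) * (k + 1) ^ (d + 1) := by
  intro k
  have h1 : |eB m e a b c k| = (((k + 1 - a) + (m (k + 1) - b) + c : ℕ) : ℝ) * |e k| := by
    rw [eB, abs_mul, abs_neg, Nat.abs_cast]
  rw [h1]
  have h2 : (((k + 1 - a) + (m (k + 1) - b) + c : ℕ) : ℝ)
      ≤ ((m 1 : ℝ) + c + 1) * ((k : ℝ) + 1) := by
    have h3 : (k + 1 - a) + (m (k + 1) - b) + c ≤ (k + 1) + (k + 1) * m 1 + c * (k + 1) := by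
      have := hlin (k + 1) (by omega)
      have h4 : c ≤ c * (k + 1) := Nat.le_mul_of_pos_right c (by omega)
      omega
    calc (((k + 1 - a) + (m (k + 1) - b) + c : ℕ) : ℝ)
        ≤ (((k + 1) + (k + 1) * m 1 + c * (k + 1) : ℕ) : ℝ) := Nat.cast_le.2 h3
      _ = ((m 1 : ℝ) + c + 1) * ((k : ℝ) + 1) := by push_cast; ring
  calc (((k + 1 - a) + (m (k + 1) - b) + c : ℕ) : ℝ) * |e k|
      ≤ (((m 1 : ℝ) + c + 1) * ((k : ℝ) + 1)) * (C * (k + 1) ^ d) :=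
        mul_le_mul h2 (hE k) (abs_nonneg _) (by positivity)
    _ = (C * (m 1 + c + 1)) * (k + 1) ^ (d + 1) := by rw [pow_succ]; ring

lemma normD_le (A B : ℝ) : ‖A • fstL + B • sndL‖ ≤ |A| + |B| := by
  refine ContinuousLinearMap.opNorm_le_bound _ (by positivity) fun w => ?_
  simp only [ContinuousLinearMap.add_apply, ContinuousLinearMap.smul_apply, fstL, sndL,
    ContinuousLinearMap.coe_fst', ContinuousLinearMap.coe_snd', smul_eq_mul]
  calc ‖A * w.1 + B * w.2‖ ≤ ‖A * w.1‖ + ‖B * w.2‖ := norm_add_le _ _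
    _ = |A| * ‖w.1‖ + |B| * ‖w.2‖ := by rw [norm_mul, norm_mul]; rfl
    _ ≤ |A| * ‖w‖ + |B| * ‖w‖ :=
        add_le_add (mul_le_mul_of_nonneg_left (norm_fst_le w) (abs_nonneg A))
          (mul_le_mul_of_nonneg_left (norm_snd_le w) (abs_nonneg B))
    _ = (|A| + |B|) * ‖w‖ := by ring

lemma hasFDerivAt_thS (R : Reg m s δ r t) (hlin : ∀ k : ℕ, 1 ≤ k → m k ≤ k * m 1)
    {e : ℕ → ℝ} {C : ℝ} {d : ℕ} (hE : ∀ k, |e k| ≤ C * (k + 1) ^ d)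
    (a b c : ℕ) {p : ℝ × ℝ} (hp : p ∈ s) :
    HasFDerivAt (thS m e a b c)
      ((thS m (eA1 e a) (a + 1) b (c + 1) p + thS m (eA2 m e b) a (b + 1) (c + 1) p) • fstL
        + (thS m (eB m e a b c) a b (c + 1) p) • sndL) p := by
  have ht0 : (0:ℝ) < t := lt_of_lt_of_le one_pos R.ht
  have hw0 : (0:ℝ) ≤ r * t ^ m 1 := mul_nonneg (le_of_lt R.hr) (pow_nonneg (le_of_lt ht0) _)
  set K : ℝ := C / r ^ (a + 1) / δ ^ (c + 1) + (C * m 1) / r ^ a / δ ^ (c + 1)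
    + (C * (m 1 + c + 1)) / r ^ a / δ ^ (c + 1) with hK
  set u : ℕ → ℝ := fun k => K * ((k + 1 : ℝ) ^ (d + 1) * (r * t ^ m 1) ^ (k + 1)) with hu
  have hus : Summable u := ((summable_geom_aux (d + 1) hw0 R.hw)).mul_left K
  set F' : ℕ → ℝ × ℝ → (ℝ × ℝ →L[ℝ] ℝ) := fun k q =>
    (thT m (eA1 e a) (a + 1) b (c + 1) k q + thT m (eA2 m e b) a (b + 1) (c + 1) k q) • fstL
      + (thT m (eB m e a b c) a b (c + 1) k q) • sndL with hF'
  have hF'le : ∀ k : ℕ, ∀ q ∈ s, ‖F' k q‖ ≤ u k := by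
    intro k q hq
    have b1 := thT_le R hlin (eA1_bound hE a) (a + 1) b (c + 1) hq k
    have b2 := thT_le R hlin (eA2_bound hE hlin b) a (b + 1) (c + 1) hq k
    have b3 := thT_le R hlin (eB_bound hE hlin a b c) a b (c + 1) hq k
    calc ‖F' k q‖ ≤ |thT m (eA1 e a) (a + 1) b (c + 1) k q
          + thT m (eA2 m e b) a (b + 1) (c + 1) k q| + |thT m (eB m e a b c) a b (c + 1) k q| :=
        normD_le _ _
      _ ≤ (|thT m (eA1 e a) (a + 1) b (c + 1) k q| + |thT m (eA2 m e b) a (b + 1) (c + 1) k q|)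
          + |thT m (eB m e a b c) a b (c + 1) k q| := by
            gcongr; exact abs_add_le _ _
      _ ≤ u k := by
        rw [hu]
        have := add_le_add (add_le_add b1 b2) b3
        calc _ ≤ _ := this
          _ = K * ((k + 1 : ℝ) ^ (d + 1) * (r * t ^ m 1) ^ (k + 1)) := by rw [hK]; ring
    
  have hsum : ∀ q ∈ s, Summable (fun k => thT m e a b c k q) := fun q hq =>
    summable_thT R hlin hE a b c hq
  have main : HasFDerivAt (thS m e a b c) (∑' k, F' k p) p := by
    refine hasFDerivAt_of_tendstoUniformlyOn R.opn (tendstoUniformlyOn_tsum hus hF'le)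
      (fun T q hq => ?_) (fun q hq => (hsum q hq).hasSum) hp
    exact HasFDerivAt.fun_sum fun i _ => hasFDerivAt_thT m e a b c i
      (ne_of_gt (lt_of_lt_of_le R.hδ (R.hβ q hq)))
  have sA1 : Summable (fun k => thT m (eA1 e a) (a + 1) b (c + 1) k p) :=
    summable_thT R hlin (eA1_bound hE a) _ _ _ hp
  have sA2 : Summable (fun k => thT m (eA2 m e b) a (b + 1) (c + 1) k p) :=
    summable_thT R hlin (eA2_bound hE hlin b) _ _ _ hp
  have sB : Summable (fun k => thT m (eB m e a b c) a b (c + 1) k p) :=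
    summable_thT R hlin (eB_bound hE hlin a b c) _ _ _ hp
  have heq : ∑' k, F' k p
      = (thS m (eA1 e a) (a + 1) b (c + 1) p + thS m (eA2 m e b) a (b + 1) (c + 1) p) • fstL
        + (thS m (eB m e a b c) a b (c + 1) p) • sndL := by
    rw [hF']
    rw [Summable.tsum_add ((sA1.add sA2).smul_const fstL) (sB.smul_const sndL),
      Summable.tsum_smul_const (sA1.add sA2), Summable.tsum_smul_const sB, Summable.tsum_add sA1 sA2]
    rfl
  rw [heq] at main
  exact main

lemma contDiffOn_thS (R : Reg m s δ r t) (hlin : ∀ k : ℕ, 1 ≤ k → m k ≤ k * m 1) :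
    ∀ (n : ℕ) (e : ℕ → ℝ) (a b c : ℕ) (C : ℝ) (d : ℕ),
      (∀ k, |e k| ≤ C * (k + 1) ^ d) → ContDiffOn ℝ n (thS m e a b c) s := by
  intro n
  induction n with
  | zero =>
    intro e a b c C d hE
    rw [show ((0 : ℕ) : WithTop ℕ∞) = 0 from rfl, contDiffOn_zero]
    intro p hp
    exact ((hasFDerivAt_thS R hlin hE a b c hp).differentiableAt).continuousAt.continuousWithinAt
  | succ n IH =>
    intro e a b c C d hE
    rw [show ((n + 1 : ℕ) : WithTop ℕ∞) = (n : WithTop ℕ∞) + 1 by push_cast; rfl]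
    rw [contDiffOn_succ_iff_fderiv_of_isOpen R.opn]
    refine ⟨fun p hp =>
      (hasFDerivAt_thS R hlin hE a b c hp).differentiableAt.differentiableWithinAt,
      ?_, ?_⟩
    · intro hω
      exact absurd hω (by simp)
    · refine ContDiffOn.congr ?_ (fun p hp => (hasFDerivAt_thS R hlin hE a b c hp).fderiv)
      exact (((IH (eA1 e a) (a + 1) b (c + 1) C (d + 1) (eA1_bound hE a)).add
        (IH (eA2 m e b) a (b + 1) (c + 1) (C * m 1) (d + 1)
          (eA2_bound hE hlin b))).smul contDiffOn_const).add
        ((IH (eB m e a b c) a b (c + 1) (C * (m 1 + c + 1)) (d + 1)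
          (eB_bound hE hlin a b c)).smul contDiffOn_const)

lemma hE_one : ∀ k : ℕ, |(fun _ : ℕ => (1:ℝ)) k| ≤ 1 * (k + 1 : ℝ) ^ 0 := by
  intro k; simp

lemma theta_eq (m : ℕ → ℕ) (α β : ℝ) :
    theta m α β = 1 - β + thS m (fun _ => 1) 0 0 0 (α, β) := by
  unfold theta thS
  congr 1
  refine tsum_congr fun k => ?_
  rcases eq_or_ne β 0 with h0 | h0
  · subst h0
    simp [thT]
  · simp only [thT, Nat.sub_zero, add_zero, one_mul, div_eq_mul_inv, mul_pow, pow_add]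
    ring

lemma derivs_aux (R : Reg m s δ r t) (hlin : ∀ k : ℕ, 1 ≤ k → m k ≤ k * m 1)
    {p : ℝ × ℝ} (hp : p ∈ s) : derivAlphaEq m p ∧ derivBetaEq m p := by
  have HF := hasFDerivAt_thS R hlin hE_one 0 0 0 hp
  have sA1 : Summable (fun k => thT m (eA1 (fun _ => 1) 0) 1 0 1 k p) :=
    summable_thT R hlin (eA1_bound hE_one 0) _ _ _ hp
  have sA2 : Summable (fun k => thT m (eA2 m (fun _ => 1) 0) 0 1 1 k p) :=
    summable_thT R hlin (eA2_bound hE_one hlin 0) _ _ _ hp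
  have ident1 : ∀ k : ℕ, thT m (eA1 (fun _ => 1) 0) 1 0 1 k p
      = ((k : ℝ) + 1) / p.2 * ((p.1 - 1) / p.2) ^ k * (p.1 / p.2) ^ (m (k + 1)) := by
    intro k
    simp only [thT, eA1, Nat.sub_zero, Nat.add_sub_cancel, one_mul]
    push_cast
    simp only [div_eq_mul_inv, mul_pow, pow_add]
    ring
  have ident2 : ∀ k : ℕ, thT m (eA2 m (fun _ => 1) 0) 0 1 1 k p
      = (m (k + 1) : ℝ) / p.2 * ((p.1 - 1) / p.2) ^ (k + 1) * (p.1 / p.2) ^ (m (k + 1) - 1) := by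
    intro k
    simp only [thT, eA2, Nat.sub_zero, one_mul]
    push_cast
    simp only [div_eq_mul_inv, mul_pow, pow_add]
    ring
  have identB : ∀ k : ℕ, thT m (eB m (fun _ => 1) 0 0 0) 0 0 1 k p
      = (-(((k : ℝ) + 1) + (m (k + 1) : ℝ)) / p.2)
        * ((p.1 - 1) / p.2) ^ (k + 1) * (p.1 / p.2) ^ (m (k + 1)) := by
    intro k
    simp only [thT, eB, Nat.sub_zero, add_zero, mul_one]
    push_cast
    simp only [div_eq_mul_inv, mul_pow, pow_add]
    ring
  constructor
  · show deriv (fun a => theta m a p.2) p.1 = _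
    have h3 := HF.comp_hasDerivAt p.1 (HasDerivAt.prodMk (hasDerivAt_id p.1) (hasDerivAt_const p.1 p.2))
    have hval : (((thS m (eA1 (fun _ => 1) 0) 1 0 1 p + thS m (eA2 m (fun _ => 1) 0) 0 1 1 p)
          • fstL + thS m (eB m (fun _ => 1) 0 0 0) 0 0 1 p • sndL) : ℝ × ℝ →L[ℝ] ℝ)
        ((1:ℝ), (0:ℝ))
        = thS m (eA1 (fun _ => 1) 0) 1 0 1 p + thS m (eA2 m (fun _ => 1) 0) 0 1 1 p := by
      simp [fstL, sndL]
    rw [hval] at h3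
    have h2 : HasDerivAt (fun a : ℝ => thS m (fun _ => 1) 0 0 0 (a, p.2))
        (thS m (eA1 (fun _ => 1) 0) 1 0 1 p + thS m (eA2 m (fun _ => 1) 0) 0 1 1 p) p.1 := by
      exact h3
    have hθ : (fun a : ℝ => theta m a p.2)
        = fun a =>(1 - p.2) + thS m (fun _ => 1) 0 0 0 (a, p.2) :=
      funext fun a => theta_eq m a p.2
    rw [hθ, (h2.const_add (1 - p.2)).deriv]
    calc thS m (eA1 (fun _ => 1) 0) 1 0 1 p + thS m (eA2 m (fun _ => 1) 0) 0 1 1 p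
        = (∑' k : ℕ, ((k : ℝ) + 1) / p.2 * ((p.1 - 1) / p.2) ^ k * (p.1 / p.2) ^ (m (k + 1)))
          + ∑' k : ℕ, (m (k + 1) : ℝ) / p.2 * ((p.1 - 1) / p.2) ^ (k + 1)
            * (p.1 / p.2) ^ (m (k + 1) - 1) := by
          simp only [thS]
          rw [tsum_congr ident1, tsum_congr ident2]
      _ = _ := (Summable.tsum_add (sA1.congr ident1) (sA2.congr ident2)).symm
  · show deriv (fun b => theta m p.1 b) p.2 = _
    have h3 := HF.comp_hasDerivAt p.2 (HasDerivAt.prodMk (hasDerivAt_const p.2 p.1) (hasDerivAt_id p.2))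
    have hval : (((thS m (eA1 (fun _ => 1) 0) 1 0 1 p + thS m (eA2 m (fun _ => 1) 0) 0 1 1 p)
          • fstL + thS m (eB m (fun _ => 1) 0 0 0) 0 0 1 p • sndL) : ℝ × ℝ →L[ℝ] ℝ)
        ((0:ℝ), (1:ℝ)) = thS m (eB m (fun _ => 1) 0 0 0) 0 0 1 p := by
      simp [fstL, sndL]
    rw [hval] at h3
    have h2 : HasDerivAt (fun b : ℝ => thS m (fun _ => 1) 0 0 0 (p.1, b))
        (thS m (eB m (fun _ => 1) 0 0 0) 0 0 1 p) p.2 := by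
      exact h3
    have hd : HasDerivAt (fun b : ℝ => 1 - b + thS m (fun _ => 1) 0 0 0 (p.1, b))
        (-1 + thS m (eB m (fun _ => 1) 0 0 0) 0 0 1 p) p.2 := by
      exact ((hasDerivAt_id p.2).const_sub 1).add h2
    have hθ : (fun b : ℝ => theta m p.1 b)
        = fun b => 1 - b + thS m (fun _ => 1) 0 0 0 (p.1, b) :=
      funext fun b => theta_eq m p.1 b
    rw [hθ, hd.deriv]
    simp only [thS]
    rw [tsum_congr identB]

lemma contDiffOn_theta (R : Reg m s δ r t) (hlin : ∀ k : ℕ, 1 ≤ k → m k ≤ k * m 1) :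
    ContDiffOn ℝ (⊤ : ℕ∞) (fun p : ℝ × ℝ => theta m p.1 p.2) s := by
  have hS : ContDiffOn ℝ (⊤ : ℕ∞) (fun p : ℝ × ℝ =>
      (1 - p.2) + thS m (fun _ => 1) 0 0 0 p) s := by
    refine ContDiffOn.add ?_ ?_
    · exact (contDiff_const.sub contDiff_snd).contDiffOn
    · exact contDiffOn_infty.2 fun n => contDiffOn_thS R hlin n _ 0 0 0 1 0 hE_one
  refine hS.congr fun p hp => ?_
  rw [show theta m p.1 p.2 = 1 - p.2 + thS m (fun _ => 1) 0 0 0 (p.1, p.2) from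
    theta_eq m p.1 p.2]

lemma local_region {m : ℕ → ℕ} {p : ℝ × ℝ}
    (hp : 1 / 2 < p.2 ∧ p.2 < 1 ∧ 1 - p.2 < p.1 ∧ p.1 < p.2) :
    ∃ u : Set (ℝ × ℝ), Reg m u (1 / 2) ((|p.1 - 1| / p.2 + 1) / 2) 1 ∧ p ∈ u ∧
      u ⊆ {q : ℝ × ℝ | 1 / 2 < q.2 ∧ q.2 < 1 ∧ 1 - q.2 < q.1 ∧ q.1 < q.2} := by
  obtain ⟨h1, h2, h3, h4⟩ := hp
  have hβ : (0:ℝ) < p.2 := by linarith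
  set r : ℝ := (|p.1 - 1| / p.2 + 1) / 2 with hr
  have habs : |p.1 - 1| = 1 - p.1 := by
    rw [abs_of_neg (by linarith)]; ring
  have hx1 : |p.1 - 1| / p.2 < 1 := by
    rw [div_lt_one hβ, habs]; linarith
  have hx0 : 0 ≤ |p.1 - 1| / p.2 := div_nonneg (abs_nonneg _) (le_of_lt hβ)
  have hr0 : 0 < r := by rw [hr]; linarith
  have hr1 : r < 1 := by rw [hr]; linarith
  refine ⟨{q : ℝ × ℝ | 1 / 2 < q.2} ∩ ({q | q.2 < 1} ∩ ({q | 1 - q.2 < q.1} ∩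
    ({q | q.1 < q.2} ∩ {q | |q.1 - 1| < r * q.2}))), ?_, ?_, ?_⟩
  · constructor
    · refine (isOpen_lt continuous_const continuous_snd).inter
        ((isOpen_lt continuous_snd continuous_const).inter
        ((isOpen_lt (continuous_const.sub continuous_snd) continuous_fst).inter
        ((isOpen_lt continuous_fst continuous_snd).inter
        (isOpen_lt ((continuous_fst.sub continuous_const).abs)
          (continuous_const.mul continuous_snd)))))
    · norm_num
    · exact hr0
    · exact le_refl 1
    · simpa using hr1
    · rintro q ⟨hq1, _, _, _, _⟩; exact le_of_lt hq1
    · rintro q ⟨_, _, _, _, hq5⟩; exact le_of_lt hq5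
    · rintro q ⟨hq1, hq2, hq3, hq4, _⟩
      simp only [Set.mem_setOf_eq] at hq1 hq2 hq3 hq4
      rw [one_mul, abs_of_pos (by linarith)]
      exact le_of_lt hq4
  · refine ⟨h1, h2, h3, h4, ?_⟩
    show |p.1 - 1| < r * p.2
    rw [← div_lt_iff₀ hβ]
    rw [hr]; linarith
  · rintro q ⟨hq1, hq2, hq3, hq4, _⟩; exact ⟨hq1, hq2, hq3, hq4⟩


/-- `Θ` is infinitely differentiable on the open region
`{(α,β) : 1/2 < β < 1, 1-β < α < β}`, and also on a neighborhood of each diagonal point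
`(β₀,β₀)` with `β₀ ∈ (1/2,1)`; on these sets the first partial derivatives are given by
termwise differentiation of the defining series. -/
theorem stmt9 (m : ℕ → ℕ) (hm0 : m 0 = 0) (hm1 : 1 ≤ m 1) (hmono : Monotone m)
    (hlin : ∀ k : ℕ, 1 ≤ k → m k ≤ k * m 1) :
    ContDiffOn ℝ (⊤ : ℕ∞) (fun p : ℝ × ℝ => theta m p.1 p.2)
      {p : ℝ × ℝ | 1 / 2 < p.2 ∧ p.2 < 1 ∧ 1 - p.2 < p.1 ∧ p.1 < p.2} ∧
    (∀ p : ℝ × ℝ, (1 / 2 < p.2 ∧ p.2 < 1 ∧ 1 - p.2 < p.1 ∧ p.1 < p.2) →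
      derivAlphaEq m p ∧ derivBetaEq m p) ∧
    (∀ β₀ ∈ Set.Ioo (1 / 2 : ℝ) 1, ∃ s : Set (ℝ × ℝ), IsOpen s ∧ (β₀, β₀) ∈ s ∧
      ContDiffOn ℝ (⊤ : ℕ∞) (fun p : ℝ × ℝ => theta m p.1 p.2) s ∧
      ∀ p ∈ s, derivAlphaEq m p ∧ derivBetaEq m p) := by
  refine ⟨?_, ?_, ?_⟩
  · refine contDiffOn_of_locally_contDiffOn fun p hp => ?_
    obtain ⟨u, R, hpu, husub⟩ := local_region (m := m) hp
    exact ⟨u, R.opn, hpu, (contDiffOn_theta R hlin).mono inter_subset_right⟩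
  · intro p hp
    obtain ⟨u, R, hpu, husub⟩ := local_region (m := m) hp
    exact derivs_aux R hlin hpu
  · rintro β₀ ⟨hb1, hb2⟩
    have hβ0 : (0:ℝ) < β₀ := by linarith
    set x0 : ℝ := (1 - β₀) / β₀ with hx0def
    have hx01 : x0 < 1 := by rw [hx0def, div_lt_one hβ0]; linarith
    have hx00 : 0 < x0 := div_pos (by linarith) hβ0
    set r : ℝ := (x0 + 1) / 2 with hrdef
    have hr0 : 0 < r := by rw [hrdef]; linarith
    have hr1 : r < 1 := by rw [hrdef]; linarith
    have hrx : x0 < r := by rw [hrdef]; linarith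
    have hev : ∀ᶠ τ : ℝ in nhds 1, r * τ ^ m 1 < 1 :=
      ((continuous_const.mul (continuous_pow (m 1))).tendsto 1).eventually_lt_const
        (show r * (1:ℝ) ^ m 1 < 1 by simpa using hr1)
    obtain ⟨ε, hε, hball⟩ := Metric.eventually_nhds_iff.1 hev
    set t : ℝ := 1 + ε / 2 with htdef
    have ht1 : 1 < t := by rw [htdef]; linarith
    have hwt : r * t ^ m 1 < 1 := by
      refine hball ?_
      rw [Real.dist_eq, htdef]
      rw [show (1 + ε / 2 - 1) = ε / 2 by ring, abs_of_pos (by linarith)]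
      linarith
    set u : Set (ℝ × ℝ) := {q : ℝ × ℝ | β₀ / 2 < q.2} ∩ ({q | |q.1 - 1| < r * q.2} ∩
      {q | |q.1| < t * q.2}) with hudef
    have R : Reg m u (β₀ / 2) r t := by
      constructor
      · refine (isOpen_lt continuous_const continuous_snd).inter
          ((isOpen_lt ((continuous_fst.sub continuous_const).abs)
            (continuous_const.mul continuous_snd)).inter
          (isOpen_lt continuous_fst.abs (continuous_const.mul continuous_snd)))
      · linarith
      · exact hr0
      · exact le_of_lt ht1
      · exact hwt
      · rintro q ⟨hq1, _, _⟩; exact le_of_lt hq1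
      · rintro q ⟨_, hq2, _⟩; exact le_of_lt hq2
      · rintro q ⟨_, _, hq3⟩; exact le_of_lt hq3
    have hmem : ((β₀, β₀) : ℝ × ℝ) ∈ u := by
      refine ⟨by show β₀ / 2 < β₀; linarith, ?_, ?_⟩
      · show |β₀ - 1| < r * β₀
        rw [abs_of_neg (by linarith)]
        have : 1 - β₀ = x0 * β₀ := by rw [hx0def]; field_simp
        nlinarith
      · show |β₀| < t * β₀
        rw [abs_of_pos hβ0]
        nlinarith
    exact ⟨u, R.opn, hmem, contDiffOn_theta R hlin, fun p hp => derivs_aux R hlin hp⟩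


end Main
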